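/- For any λ > 0 and r > 0, the Yukawa kernel admits the integral representation e^{−r/λ}/r = ∫_{−∞}^{∞} (1/√π) · exp(−r² e^t − e^{−t}/(4λ²) + t/2) dt. -/

import Mathlib

open Real MeasureTheory Filter

/-- Integral representation of the Yukawa kernel:
`e^{−r/λ}/r = ∫_{−∞}^∞ (1/√π)·exp(−r² e^t − e^{−t}/(4λ²) + t/2) dt`. -/
theorem yukawa_integral_repr (lam r : ℝ) (hlam : 0 < lam) (hr : 0 < r) :
    Real.exp (-r / lam) / r =
      ∫ t : ℝ, (1 / Real.sqrt π) *
        Real.exp (-(r ^ 2 * Real.exp t) - Real.exp (-t) / (4 * lam ^ 2) + t / 2) := by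
  set f : ℝ → ℝ := fun t => Real.exp (-(r ^ 2 * Real.exp t) - Real.exp (-t) / (4 * lam ^ 2) + t / 2) with hf
  set g : ℝ → ℝ := fun t => r * Real.exp (t / 2) - Real.exp (-t / 2) / (2 * lam) with hg
  set g' : ℝ → ℝ := fun t => r * Real.exp (t / 2) / 2 + Real.exp (-t / 2) / (4 * lam) with hg'
  set t0 : ℝ := -Real.log (4 * lam ^ 2 * r ^ 2) with ht0
  have hpos : (0:ℝ) < 4 * lam ^ 2 * r ^ 2 := by positivity
  have het0 : Real.exp t0 = 1 / (4 * lam ^ 2 * r ^ 2) := by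
    rw [ht0, Real.exp_neg, Real.exp_log hpos, one_div]
  have het0half : Real.exp (t0 / 2) = 1 / (2 * lam * r) := by
    have h1 : Real.exp (t0 / 2) ^ 2 = Real.exp t0 := by
      rw [sq, ← Real.exp_add]; congr 1; ring
    have h2 : (1 / (2 * lam * r) : ℝ) ^ 2 = 1 / (4 * lam ^ 2 * r ^ 2) := by
      field_simp; ring
    have h3 := h1.trans (het0.trans h2.symm)
    have hpos1 : (0:ℝ) < Real.exp (t0 / 2) := Real.exp_pos _
    have hpos2 : (0:ℝ) < 1 / (2 * lam * r) := by positivity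
    nlinarith
  -- derivative of g
  have hderiv : ∀ t, HasDerivAt g (g' t) t := by
    intro t
    have h1 : HasDerivAt (fun t : ℝ => r * Real.exp (t / 2)) (r * (Real.exp (t / 2) * (1/2))) t := by
      have h : HasDerivAt (fun t : ℝ => t / 2) (1/2) t := (hasDerivAt_id t).div_const 2
      exact h.exp.const_mul r
    have h2 : HasDerivAt (fun t : ℝ => Real.exp (-t / 2) / (2 * lam))
        ((Real.exp (-t / 2) * (-1/2)) / (2 * lam)) t := by
      have h : HasDerivAt (fun t : ℝ => -t / 2) (-1/2) t := by
        simpa using ((hasDerivAt_id t).neg.div_const 2)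
      exact h.exp.div_const (2 * lam)
    have h3 := h1.sub h2
    exact h3.congr_deriv (by simp only [hg']; ring)
  have hg'pos : ∀ t, 0 < g' t := by
    intro t; rw [hg']; positivity
  -- key pointwise identity
  have hkey : ∀ t, f t + f (t0 - t) =
      (2 / r) * Real.exp (-r / lam) * (Real.exp (-(g t) ^ 2) * g' t) := by
    intro t
    have hmul : Real.exp (t / 2) * Real.exp (-t / 2) = 1 := by
      rw [← Real.exp_add, ← Real.exp_zero]; congr 1; ring
    have hsq1 : Real.exp (t / 2) ^ 2 = Real.exp t := by
      rw [sq, ← Real.exp_add]; congr 1; ring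
    have hsq2 : Real.exp (-t / 2) ^ 2 = Real.exp (-t) := by
      rw [sq, ← Real.exp_add]; congr 1; ring
    have e1 : Real.exp (t0 - t) = Real.exp (-t) / (4 * lam ^ 2 * r ^ 2) := by
      rw [Real.exp_sub, het0, Real.exp_neg]; field_simp
    have e2 : Real.exp (-(t0 - t)) = 4 * lam ^ 2 * r ^ 2 * Real.exp t := by
      rw [neg_sub, Real.exp_sub, het0]
      field_simp
    have e3 : Real.exp ((t0 - t) / 2) = Real.exp (-t / 2) / (2 * lam * r) := by
      rw [show (t0 - t)/2 = t0/2 + (-t/2) by ring, Real.exp_add, het0half]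
      field_simp
    have hsq : (g t) ^ 2 = r ^ 2 * Real.exp t - r / lam + Real.exp (-t) / (4 * lam ^ 2) := by
      rw [hg]
      show (r * Real.exp (t / 2) - Real.exp (-t / 2) / (2 * lam)) ^ 2 = _
      linear_combination (r ^ 2) * hsq1 + (1 / (4 * lam ^ 2)) * hsq2 - (r / lam) * hmul
    have step1 : f (t0 - t) = Real.exp (-(r ^ 2 * Real.exp t) - Real.exp (-t) / (4 * lam ^ 2))
        * (Real.exp (-t / 2) / (2 * lam * r)) := by
      rw [hf]
      show Real.exp (-(r ^ 2 * Real.exp (t0 - t)) - Real.exp (-(t0 - t)) / (4 * lam ^ 2) + (t0 - t)/2) = _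
      rw [show -(r ^ 2 * Real.exp (t0 - t)) - Real.exp (-(t0 - t)) / (4 * lam ^ 2) + (t0 - t) / 2
          = (-(r ^ 2 * Real.exp t) - Real.exp (-t) / (4 * lam ^ 2)) + (t0 - t) / 2 by
        rw [e1, e2]; field_simp; ring]
      rw [Real.exp_add, e3]
    have step2 : f t = Real.exp (-(r ^ 2 * Real.exp t) - Real.exp (-t) / (4 * lam ^ 2))
        * Real.exp (t / 2) := by
      rw [hf]
      show Real.exp (-(r ^ 2 * Real.exp t) - Real.exp (-t) / (4 * lam ^ 2) + t/2) = _
      rw [Real.exp_add]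
    rw [step1, step2, ← mul_add]
    have hE : -(r ^ 2 * Real.exp t) - Real.exp (-t) / (4 * lam ^ 2)
        = -(g t) ^ 2 + (-r / lam) := by rw [hsq]; ring
    rw [hE, Real.exp_add]
    rw [show Real.exp (t/2) + Real.exp (-t/2) / (2 * lam * r) = (2 / r) * g' t by
      rw [hg']; field_simp; ring]
    ring
  -- g is a bijection
  have hinj : Function.Injective g := by
    have hmono : StrictMono g := by
      apply strictMono_of_deriv_pos
      intro t
      rw [(hderiv t).deriv]
      exact hg'pos t
    exact hmono.injective
  have hsurj : Function.Surjective g := by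
    have hc : Continuous g := by
      rw [hg]; fun_prop
    apply hc.surjective
    · have h1 : Tendsto (fun t : ℝ => r * Real.exp (t / 2)) atTop atTop := by
        apply Tendsto.const_mul_atTop hr
        exact Real.tendsto_exp_atTop.comp (tendsto_id.atTop_div_const two_pos)
      have h2 : Tendsto (fun t : ℝ => Real.exp (-t / 2) / (2 * lam)) atTop (nhds 0) := by
        have : Tendsto (fun t : ℝ => Real.exp (-t / 2)) atTop (nhds 0) := by
          apply Real.tendsto_exp_atBot.comp
          simp only [neg_div]
          exact tendsto_neg_atTop_atBot.comp (tendsto_id.atTop_div_const two_pos)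
        simpa using this.div_const (2 * lam)
      have := h1.atTop_add (h2.neg)
      simpa [hg, sub_eq_add_neg] using this
    · have h1 : Tendsto (fun t : ℝ => r * Real.exp (t / 2)) atBot (nhds 0) := by
        have : Tendsto (fun t : ℝ => Real.exp (t / 2)) atBot (nhds 0) := by
          apply Real.tendsto_exp_atBot.comp
          exact (tendsto_id (α := ℝ)).atBot_div_const two_pos
        simpa using this.const_mul r
      have h2 : Tendsto (fun t : ℝ => -(Real.exp (-t / 2) / (2 * lam))) atBot atBot := by
        apply Filter.tendsto_neg_atTop_atBot.comp
        apply Tendsto.atTop_div_const (by positivity)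
        apply Real.tendsto_exp_atTop.comp
        simp only [neg_div]
        exact tendsto_neg_atBot_atTop.comp ((tendsto_id (α := ℝ)).atBot_div_const two_pos)
      have := h1.add_atBot h2
      simpa [hg, sub_eq_add_neg] using this
  have himg : g '' Set.univ = Set.univ := by
    rw [Set.image_univ, Set.range_eq_univ.mpr hsurj]
  have hderivW : ∀ x ∈ (Set.univ : Set ℝ), HasDerivWithinAt g (g' x) Set.univ x :=
    fun x _ => (hderiv x).hasDerivWithinAt
  -- integrability of h := exp(-(g t)^2) * g' t
  have hgauss_int : IntegrableOn (fun y : ℝ => Real.exp (-y ^ 2)) Set.univ := by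
    rw [integrableOn_univ]
    simpa using integrable_exp_neg_mul_sq (one_pos)
  have hh_int : Integrable (fun t => Real.exp (-(g t) ^ 2) * g' t) := by
    have := (integrableOn_image_iff_integrableOn_abs_deriv_smul MeasurableSet.univ hderivW
      hinj.injOn (fun y : ℝ => Real.exp (-y ^ 2))).mp (himg ▸ hgauss_int)
    rw [integrableOn_univ] at this
    refine this.congr (Filter.Eventually.of_forall fun t => ?_)
    simp only [smul_eq_mul]
    rw [abs_of_pos (hg'pos t), mul_comm]
  have hh_integral : ∫ t, Real.exp (-(g t) ^ 2) * g' t = Real.sqrt π := by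
    have h1 := integral_image_eq_integral_abs_deriv_smul MeasurableSet.univ hderivW
      hinj.injOn (fun y : ℝ => Real.exp (-y ^ 2))
    rw [himg, setIntegral_univ, setIntegral_univ] at h1
    have h2 : ∫ y : ℝ, Real.exp (-y ^ 2) = Real.sqrt π := by
      simpa using integral_gaussian 1
    rw [← h2, h1]
    refine integral_congr_ae (Filter.Eventually.of_forall fun t => ?_)
    simp only [smul_eq_mul]
    rw [abs_of_pos (hg'pos t), mul_comm]
  -- integrability of f and f(t0 - ·)
  have hfcont : Continuous f := by rw [hf]; fun_prop
  have hfpos : ∀ t, 0 < f t := fun t => Real.exp_pos _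
  set C : ℝ := (2 / r) * Real.exp (-r / lam) with hC
  have hCh_int : Integrable (fun t => C * (Real.exp (-(g t) ^ 2) * g' t)) := hh_int.const_mul C
  have hf_int : Integrable f := by
    refine hCh_int.mono' hfcont.aestronglyMeasurable
      (Filter.Eventually.of_forall fun t => ?_)
    rw [Real.norm_eq_abs, abs_of_pos (hfpos t)]
    nlinarith [hkey t, (hfpos (t0 - t)).le]
  have hf2_int : Integrable (fun t => f (t0 - t)) := by
    refine hCh_int.mono' (hfcont.comp (by fun_prop)).aestronglyMeasurable
      (Filter.Eventually.of_forall fun t => ?_)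
    rw [Real.norm_eq_abs, abs_of_pos (hfpos (t0 - t))]
    nlinarith [hkey t, (hfpos t).le]
  have hshift : ∫ t, f (t0 - t) = ∫ t, f t := integral_sub_left_eq_self f volume t0
  have hsum : (∫ t, f t) + (∫ t, f t) = C * Real.sqrt π := by
    calc (∫ t, f t) + (∫ t, f t) = (∫ t, f t) + (∫ t, f (t0 - t)) := by rw [hshift]
    _ = ∫ t, (f t + f (t0 - t)) := (integral_add hf_int hf2_int).symm
    _ = ∫ t, C * (Real.exp (-(g t) ^ 2) * g' t) := by
        refine integral_congr_ae (Filter.Eventually.of_forall fun t => ?_)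
        exact hkey t
    _ = C * ∫ t, Real.exp (-(g t) ^ 2) * g' t := integral_const_mul C _
    _ = C * Real.sqrt π := by rw [hh_integral]
  have hI : ∫ t, f t = Real.sqrt π * Real.exp (-r / lam) / r := by
    have hr' : r ≠ 0 := ne_of_gt hr
    rw [hC] at hsum
    field_simp at hsum ⊢
    linarith
  have hsqrtpi : Real.sqrt π ≠ 0 := ne_of_gt (Real.sqrt_pos.mpr Real.pi_pos)
  rw [show (∫ t : ℝ, (1 / Real.sqrt π) * f t) = (1 / Real.sqrt π) * ∫ t, f t from
    integral_const_mul _ _, hI]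
  field_simp
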